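/- Cat-code MacWilliams identity (Hankel transform with modified Bessel output): For all real r ≥ 0 and α ≥ 0, ∫_0^∞ J_0(r·x)·x·e^{−x²/2}·(1 + J_0(2α·x)) dx = e^{−r²/2}·(1 + e^{−2α²}·I_0(2α·r)). Consequently, the primary weight distribution A(x) = 4πx·e^{−x²/2}(1 + J_0(2αx)) of the two-legged cat code with well-separated coherent states of amplitude norm α has dual weight distribution B(r) = r·∫_0^∞ J_0(rx)·A(x) dx = 4πr·e^{−r²/2}(1 + e^{−2α²}·I_0(2αr)). -/

import Mathlib

open Real MeasureTheory
open Set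

set_option maxHeartbeats 1000000

/-- The Bessel function of the first kind of order 0, defined by its
everywhere-convergent power series. -/
noncomputable def besselJ0 (x : ℝ) : ℝ :=
  ∑' k : ℕ, (-1 : ℝ) ^ k / ((k.factorial : ℝ)) ^ 2 * (x / 2) ^ (2 * k)

/-- The modified Bessel function of the first kind of order 0. -/
noncomputable def besselI0 (x : ℝ) : ℝ :=
  ∑' k : ℕ, (x / 2) ^ (2 * k) / ((k.factorial : ℝ)) ^ 2

lemma exp_tsum (x : ℝ) : Real.exp x = ∑' n : ℕ, x ^ n / n.factorial := by
  rw [Real.exp_eq_exp_ℝ, NormedSpace.exp_eq_tsum_div]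

lemma choose_sq_sum (k j : ℕ) :
    ∑ m ∈ Finset.range (j + 1), k.choose m * j.choose m = (k + j).choose k := by
  have h := Nat.add_choose_eq k j j
  rw [Finset.Nat.sum_antidiagonal_eq_sum_range_succ_mk] at h
  rw [Nat.choose_symm_add, h]
  refine Finset.sum_congr rfl (fun m hm => ?_)
  rw [Nat.choose_symm (Nat.lt_succ_iff.mp (Finset.mem_range.mp hm))]

noncomputable def uu (s : ℝ) (m k : ℕ) : ℝ := s ^ k * (k.choose m : ℝ) / k.factorial

lemma uu_abs (s : ℝ) (m k : ℕ) : |uu s m k| = uu |s| m k := by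
  simp [uu, abs_div, abs_mul, abs_pow, Nat.abs_cast]

lemma uu_shift (s : ℝ) (m a : ℕ) :
    uu s m (m + a) = (s ^ m / m.factorial) * (s ^ a / a.factorial) := by
  rw [uu, Nat.cast_choose ℝ (Nat.le_add_right m a), Nat.add_sub_cancel_left, pow_add]
  field_simp

lemma uu_support (s : ℝ) (m : ℕ) :
    Function.support (uu s m) ⊆ Set.range (fun a => m + a) := by
  intro k hk
  rcases le_or_gt m k with h | h
  · exact ⟨k - m, by simp; omega⟩
  · exfalso; apply hk; simp [uu, Nat.choose_eq_zero_of_lt h]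

lemma uu_summable (s : ℝ) (m : ℕ) : Summable (uu s m) := by
  rw [← Function.Injective.summable_iff (add_right_injective m)
    (fun k hk => by_contra fun h => hk (uu_support s m h))]
  have : Summable (fun a : ℕ => (s ^ m / m.factorial) * (s ^ a / a.factorial)) :=
    (Real.summable_pow_div_factorial s).mul_left _
  exact this.congr (fun a => (uu_shift s m a).symm)

lemma uu_tsum (s : ℝ) (m : ℕ) :
    ∑' k, uu s m k = s ^ m / m.factorial * Real.exp s := by
  rw [← Function.Injective.tsum_eq (add_right_injective m) (uu_support s m)]
  calc ∑' a, uu s m (m + a) = ∑' a, (s ^ m / m.factorial) * (s ^ a / a.factorial) :=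
        tsum_congr (uu_shift s m)
    _ = (s ^ m / m.factorial) * ∑' a, s ^ a / a.factorial := tsum_mul_left
    _ = _ := by rw [← exp_tsum]

lemma uu_summable_norm (s : ℝ) (m : ℕ) : Summable fun k => ‖uu s m k‖ := by
  simpa [Real.norm_eq_abs, uu_abs] using uu_summable |s| m

/-- The summand of the double series. -/
noncomputable def dd (s t : ℝ) (p : ℕ × ℕ) : ℝ :=
  ((p.1 + p.2).factorial : ℝ) / ((p.1.factorial : ℝ) ^ 2 * (p.2.factorial : ℝ) ^ 2)
    * s ^ p.1 * t ^ p.2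

lemma inner_tsum (s t : ℝ) (k j : ℕ) :
    ∑' m, uu s m k * uu t m j = dd s t (k, j) := by
  have hvan : ∑' m, uu s m k * uu t m j
      = (s ^ k * t ^ j / ((k.factorial : ℝ) * (j.factorial : ℝ)))
        * ((∑ m ∈ Finset.range (j + 1), k.choose m * j.choose m : ℕ) : ℝ) := by
    rw [tsum_eq_sum (s := Finset.range (j + 1)) ?_]
    · push_cast [Finset.mul_sum]
      refine Finset.sum_congr rfl (fun m _ => ?_)
      simp only [uu]
      ring
    · intro m hm
      have : j < m := by simpa using hm
      simp [uu, Nat.choose_eq_zero_of_lt this]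
  rw [hvan, choose_sq_sum, Nat.cast_choose ℝ (Nat.le_add_right k j),
    Nat.add_sub_cancel_left, dd]
  have hk : (k.factorial : ℝ) ≠ 0 := Nat.cast_ne_zero.mpr k.factorial_ne_zero
  have hj : (j.factorial : ℝ) ≠ 0 := Nat.cast_ne_zero.mpr j.factorial_ne_zero
  field_simp

lemma uu_nonneg (s : ℝ) (hs : 0 ≤ s) (m k : ℕ) : 0 ≤ uu s m k := by
  unfold uu; positivity

lemma summable_G_norm (s t : ℝ) :
    Summable fun q : ℕ × (ℕ × ℕ) => |uu s q.1 q.2.1 * uu t q.1 q.2.2| := by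
  have h0 : (fun q : ℕ × (ℕ × ℕ) => |uu s q.1 q.2.1 * uu t q.1 q.2.2|)
      = fun q => uu |s| q.1 q.2.1 * uu |t| q.1 q.2.2 := by
    funext q; rw [abs_mul, uu_abs, uu_abs]
  rw [h0, summable_prod_of_nonneg
    (fun q => mul_nonneg (uu_nonneg _ (abs_nonneg s) _ _) (uu_nonneg _ (abs_nonneg t) _ _))]
  constructor
  · intro m
    exact summable_mul_of_summable_norm (uu_summable_norm |s| m) (uu_summable_norm |t| m)
  · have hval : ∀ m : ℕ, ∑' (kj : ℕ × ℕ), uu |s| m kj.1 * uu |t| m kj.2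
        = (Real.exp |s| * Real.exp |t|) * ((|s| * |t|) ^ m / (m.factorial : ℝ) ^ 2) := by
      intro m
      rw [← tsum_mul_tsum_of_summable_norm (uu_summable_norm _ m) (uu_summable_norm _ m),
        uu_tsum, uu_tsum, mul_pow]
      field_simp
    rw [funext hval]
    apply Summable.mul_left
    refine Summable.of_nonneg_of_le (fun m => by positivity) (fun m => ?_)
      (Real.summable_pow_div_factorial (|s| * |t|))
    have h1 : (1 : ℝ) ≤ (m.factorial : ℝ) := by
      exact_mod_cast Nat.one_le_iff_ne_zero.mpr m.factorial_ne_zero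
    have h2 : (0 : ℝ) < (m.factorial : ℝ) := by linarith
    have h3 : (m.factorial : ℝ) ≤ (m.factorial : ℝ) ^ 2 := by nlinarith
    exact div_le_div_of_nonneg_left (by positivity) h2 h3

lemma key_tsum (s t : ℝ) :
    Summable (dd s t) ∧
    ∑' p : ℕ × ℕ, dd s t p
      = Real.exp s * Real.exp t * ∑' m : ℕ, (s * t) ^ m / (m.factorial : ℝ) ^ 2 := by
  have hGn := summable_G_norm s t
  have hG : Summable (fun q : ℕ × (ℕ × ℕ) => uu s q.1 q.2.1 * uu t q.1 q.2.2) := hGn.of_abs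
  have hH : Summable (fun q : (ℕ × ℕ) × ℕ => uu s q.2 q.1.1 * uu t q.2 q.1.2) :=
    ((Equiv.prodComm (ℕ × ℕ) ℕ).summable_iff
      (f := fun q : ℕ × (ℕ × ℕ) => uu s q.1 q.2.1 * uu t q.1 q.2.2)).mpr hG
  have hDsum : Summable (dd s t) := by
    refine hH.prod.congr (fun p => ?_)
    exact inner_tsum s t p.1 p.2
  refine ⟨hDsum, ?_⟩
  have h2 : ∑' (q : ℕ × (ℕ × ℕ)), uu s q.1 q.2.1 * uu t q.1 q.2.2
      = ∑' (q : (ℕ × ℕ) × ℕ), uu s q.2 q.1.1 * uu t q.2 q.1.2 :=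
    ((Equiv.prodComm (ℕ × ℕ) ℕ).tsum_eq
      (f := fun q : ℕ × (ℕ × ℕ) => uu s q.1 q.2.1 * uu t q.1 q.2.2)).symm
  have h1 : ∑' (q : (ℕ × ℕ) × ℕ), uu s q.2 q.1.1 * uu t q.2 q.1.2 = ∑' p, dd s t p := by
    rw [Summable.tsum_prod hH]
    exact tsum_congr fun p => inner_tsum s t p.1 p.2
  have h3 : ∑' (q : ℕ × (ℕ × ℕ)), uu s q.1 q.2.1 * uu t q.1 q.2.2
      = Real.exp s * Real.exp t * ∑' m : ℕ, (s * t) ^ m / (m.factorial : ℝ) ^ 2 := by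
    rw [Summable.tsum_prod hG]
    have : ∀ m : ℕ, ∑' (kj : ℕ × ℕ), uu s m kj.1 * uu t m kj.2
        = Real.exp s * Real.exp t * ((s * t) ^ m / (m.factorial : ℝ) ^ 2) := by
      intro m
      rw [← tsum_mul_tsum_of_summable_norm (uu_summable_norm s m) (uu_summable_norm t m),
        uu_tsum, uu_tsum, mul_pow]
      field_simp
    calc ∑' (m : ℕ) (kj : ℕ × ℕ), uu s m kj.1 * uu t m kj.2
        = ∑' m : ℕ, Real.exp s * Real.exp t * ((s * t) ^ m / (m.factorial : ℝ) ^ 2) :=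
          tsum_congr this
      _ = _ := tsum_mul_left
  rw [← h1, ← h2, h3]

noncomputable def aterm (r : ℝ) (k : ℕ) (x : ℝ) : ℝ :=
  (-1 : ℝ) ^ k / ((k.factorial : ℝ)) ^ 2 * (r * x / 2) ^ (2 * k)

lemma besselJ0_eq (r x : ℝ) : besselJ0 (r * x) = ∑' k, aterm r k x := rfl

lemma aterm_norm (r x : ℝ) (k : ℕ) :
    ‖aterm r k x‖ = ((r * x / 2) ^ 2) ^ k / ((k.factorial : ℝ)) ^ 2 := by
  simp only [aterm, Real.norm_eq_abs, pow_mul, abs_mul, abs_div, abs_pow, abs_neg,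
    abs_one, one_pow, Nat.abs_cast, abs_of_nonneg (sq_nonneg (r * x / 2))]
  ring

lemma aterm_norm_summable (r x : ℝ) : Summable fun k => ‖aterm r k x‖ := by
  rw [funext (aterm_norm r x)]
  refine Summable.of_nonneg_of_le (fun k => by positivity) (fun k => ?_)
    (Real.summable_pow_div_factorial ((r * x / 2) ^ 2))
  have h1 : (1 : ℝ) ≤ (k.factorial : ℝ) := by
    exact_mod_cast Nat.one_le_iff_ne_zero.mpr k.factorial_ne_zero
  have h2 : (0 : ℝ) < (k.factorial : ℝ) := by linarith
  have h3 : (k.factorial : ℝ) ≤ (k.factorial : ℝ) ^ 2 := by nlinarith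
  exact div_le_div_of_nonneg_left (by positivity) h2 h3

lemma aterm_summable (r x : ℝ) : Summable fun k => aterm r k x :=
  (aterm_norm_summable r x).of_norm

noncomputable def FF2 (r β : ℝ) (p : ℕ × ℕ) (x : ℝ) : ℝ :=
  aterm r p.1 x * aterm β p.2 x * (x * Real.exp (-x ^ 2 / 2))

noncomputable def FF1 (r : ℝ) (p : ℕ × ℕ) (x : ℝ) : ℝ :=
  if p.2 = 0 then aterm r p.1 x * (x * Real.exp (-x ^ 2 / 2)) else 0

/-- monomial form of `FF2`. -/
lemma FF2_eq (r β : ℝ) (p : ℕ × ℕ) (x : ℝ) :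
    FF2 r β p x
      = ((-1 : ℝ) ^ p.1 * (r / 2) ^ (2 * p.1) / ((p.1.factorial : ℝ)) ^ 2)
        * ((-1 : ℝ) ^ p.2 * (β / 2) ^ (2 * p.2) / ((p.2.factorial : ℝ)) ^ 2)
        * (x ^ (2 * (p.1 + p.2) + 1) * Real.exp (-x ^ 2 / 2)) := by
  simp only [FF2, aterm]
  ring

lemma FF1_eq (r : ℝ) (k : ℕ) (x : ℝ) :
    FF1 r (k, 0) x
      = ((-1 : ℝ) ^ k * (r / 2) ^ (2 * k) / ((k.factorial : ℝ)) ^ 2)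
        * (x ^ (2 * k + 1) * Real.exp (-x ^ 2 / 2)) := by
  simp only [FF1, aterm, if_true, reduceIte]
  ring

lemma neg_half_pow (y : ℝ) (n : ℕ) :
    (-1 : ℝ) ^ n * (y / 2) ^ (2 * n) * 2 ^ n = (-y ^ 2 / 2) ^ n := by
  rw [pow_mul, ← mul_pow, ← mul_pow]
  congr 1
  ring

lemma pos_half_pow (y : ℝ) (n : ℕ) :
    (y / 2) ^ (2 * n) * 2 ^ n = (y ^ 2 / 2) ^ n := by
  rw [pow_mul, ← mul_pow]
  congr 1
  ring

lemma cast_pos' (n : ℕ) : (-1 : ℝ) < ((2 * n + 1 : ℕ) : ℝ) := by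
  have : (0:ℝ) ≤ n := Nat.cast_nonneg n
  push_cast; linarith

lemma moment_integrable (n : ℕ) :
    IntegrableOn (fun x : ℝ => x ^ (2 * n + 1) * Real.exp (-x ^ 2 / 2)) (Ioi 0) := by
  have h := integrableOn_rpow_mul_exp_neg_mul_sq (b := 1/2) (by norm_num)
    (s := ((2 * n + 1 : ℕ) : ℝ)) (cast_pos' n)
  refine h.congr_fun (fun x hx => ?_) measurableSet_Ioi
  beta_reduce
  rw [Real.rpow_natCast]
  congr 1
  ring

lemma moment_eq (n : ℕ) :
    ∫ x in Ioi (0 : ℝ), x ^ (2 * n + 1) * Real.exp (-x ^ 2 / 2)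
      = 2 ^ n * n.factorial := by
  have h := integral_rpow_mul_exp_neg_mul_rpow (p := 2) (q := ((2 * n + 1 : ℕ) : ℝ))
    (by norm_num) (cast_pos' n) (b := 1/2) (by norm_num)
  have e1 : ∫ x in Ioi (0 : ℝ), x ^ (2 * n + 1) * Real.exp (-x ^ 2 / 2)
      = ∫ x in Ioi (0 : ℝ), x ^ ((2 * n + 1 : ℕ) : ℝ) * Real.exp (-(1/2) * x ^ (2 : ℝ)) := by
    refine setIntegral_congr_fun measurableSet_Ioi (fun x hx => ?_)
    rw [Real.rpow_natCast, Real.rpow_two]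
    congr 1
    ring
  rw [e1, h]
  have e2 : (-(((2 * n + 1 : ℕ) : ℝ) + 1) / 2) = -((n : ℝ) + 1) := by push_cast; ring
  have e3 : ((((2 * n + 1 : ℕ) : ℝ)) + 1) / 2 = (n : ℝ) + 1 := by push_cast; ring
  rw [e2, e3, Real.Gamma_nat_eq_factorial]
  have : ((1 : ℝ)/2) ^ (-((n : ℝ) + 1)) = 2 ^ (n + 1 : ℕ) := by
    rw [Real.rpow_neg (by norm_num), one_div, ← Real.rpow_natCast 2 (n+1)]
    rw [← Real.inv_rpow (by norm_num), inv_inv]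
    push_cast
    ring_nf
  rw [this]
  ring

lemma FF2_integrableOn (r β : ℝ) (p : ℕ × ℕ) :
    IntegrableOn (FF2 r β p) (Ioi 0) := by
  have h := (moment_integrable (p.1 + p.2)).const_mul
    (((-1 : ℝ) ^ p.1 * (r / 2) ^ (2 * p.1) / ((p.1.factorial : ℝ)) ^ 2)
      * ((-1 : ℝ) ^ p.2 * (β / 2) ^ (2 * p.2) / ((p.2.factorial : ℝ)) ^ 2))
  exact MeasureTheory.IntegrableOn.congr_fun h (fun x _ => (FF2_eq r β p x).symm)
    measurableSet_Ioi

lemma FF2_integral (r β : ℝ) (p : ℕ × ℕ) :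
    ∫ x in Ioi (0 : ℝ), FF2 r β p x = dd (-r ^ 2 / 2) (-β ^ 2 / 2) p := by
  simp_rw [FF2_eq, MeasureTheory.integral_const_mul, moment_eq]
  rw [dd, ← neg_half_pow r p.1, ← neg_half_pow β p.2, pow_add]
  ring

lemma abs_c (y : ℝ) (n m : ℕ) :
    |(-1 : ℝ) ^ n * (y / 2) ^ (2 * n) / (m : ℝ) ^ 2| = ((y / 2) ^ 2) ^ n / (m : ℝ) ^ 2 := by
  rw [abs_div, abs_mul, abs_pow, abs_neg, abs_one, one_pow, one_mul, abs_pow, pow_mul,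
    sq_abs, abs_pow, Nat.abs_cast]

lemma FF2_norm_integral (r β : ℝ) (p : ℕ × ℕ) :
    ∫ x in Ioi (0 : ℝ), ‖FF2 r β p x‖ = dd (r ^ 2 / 2) (β ^ 2 / 2) p := by
  have habs : ∀ x ∈ Ioi (0 : ℝ), ‖FF2 r β p x‖
      = (((r / 2) ^ 2) ^ p.1 / ((p.1.factorial : ℝ)) ^ 2)
        * (((β / 2) ^ 2) ^ p.2 / ((p.2.factorial : ℝ)) ^ 2)
        * (x ^ (2 * (p.1 + p.2) + 1) * Real.exp (-x ^ 2 / 2)) := by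
    intro x hx
    have hx0 : (0 : ℝ) ≤ x := le_of_lt hx
    rw [Real.norm_eq_abs, FF2_eq, abs_mul, abs_mul, abs_mul, abs_c r p.1, abs_c β p.2,
      abs_pow, abs_of_nonneg hx0, Real.abs_exp]
  rw [setIntegral_congr_fun measurableSet_Ioi habs]
  simp_rw [MeasureTheory.integral_const_mul, moment_eq]
  rw [dd, ← pos_half_pow r p.1, ← pos_half_pow β p.2, pow_add, pow_mul, pow_mul]
  ring

lemma FF1_integrableOn (r : ℝ) (p : ℕ × ℕ) : IntegrableOn (FF1 r p) (Ioi 0) := by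
  obtain ⟨k, j⟩ := p
  cases j with
  | zero =>
    have h := (moment_integrable k).const_mul
      ((-1 : ℝ) ^ k * (r / 2) ^ (2 * k) / ((k.factorial : ℝ)) ^ 2)
    exact MeasureTheory.IntegrableOn.congr_fun h (fun x _ => (FF1_eq r k x).symm)
      measurableSet_Ioi
  | succ j =>
    have h0 : FF1 r (k, j + 1) = fun _ => (0 : ℝ) := by funext x; simp [FF1]
    rw [h0]
    exact integrableOn_zero

lemma FF1_integral (r : ℝ) (k : ℕ) :
    ∫ x in Ioi (0 : ℝ), FF1 r (k, 0) x = (-r ^ 2 / 2) ^ k / (k.factorial : ℝ) := by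
  simp_rw [FF1_eq, MeasureTheory.integral_const_mul, moment_eq, ← neg_half_pow r k]
  have hk : (k.factorial : ℝ) ≠ 0 := Nat.cast_ne_zero.mpr k.factorial_ne_zero
  field_simp

lemma FF1_norm_integral (r : ℝ) (k : ℕ) :
    ∫ x in Ioi (0 : ℝ), ‖FF1 r (k, 0) x‖ = (r ^ 2 / 2) ^ k / (k.factorial : ℝ) := by
  have habs : ∀ x ∈ Ioi (0 : ℝ), ‖FF1 r (k, 0) x‖
      = (((r / 2) ^ 2) ^ k / ((k.factorial : ℝ)) ^ 2)
        * (x ^ (2 * k + 1) * Real.exp (-x ^ 2 / 2)) := by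
    intro x hx
    have hx0 : (0 : ℝ) ≤ x := le_of_lt hx
    rw [Real.norm_eq_abs, FF1_eq, abs_mul, abs_c r k, abs_mul, abs_pow,
      abs_of_nonneg hx0, Real.abs_exp]
  have h4 : (((r / 2) ^ 2 : ℝ)) ^ k * 2 ^ k = (r ^ 2 / 2) ^ k := by
    rw [← mul_pow]; congr 1; ring
  rw [setIntegral_congr_fun measurableSet_Ioi habs, MeasureTheory.integral_const_mul,
    moment_eq, ← h4]
  have hk : (k.factorial : ℝ) ≠ 0 := Nat.cast_ne_zero.mpr k.factorial_ne_zero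
  field_simp

lemma pair_inj : Function.Injective (fun k : ℕ => ((k, 0) : ℕ × ℕ)) :=
  fun a b h => by simpa using h

lemma pair_supp (g : ℕ → ℝ) :
    Function.support (fun p : ℕ × ℕ => if p.2 = 0 then g p.1 else 0)
      ⊆ Set.range (fun k : ℕ => ((k, 0) : ℕ × ℕ)) := by
  intro p hp
  by_cases h : p.2 = 0
  · exact ⟨p.1, by simp [Prod.ext_iff, h]⟩
  · exact absurd (if_neg h) hp

lemma summable_pair_zero (g : ℕ → ℝ) (hg : Summable g) :
    Summable (fun p : ℕ × ℕ => if p.2 = 0 then g p.1 else 0) := by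
  rw [← Function.Injective.summable_iff pair_inj
    (fun p hp => by_contra fun h => hp (pair_supp g h))]
  exact hg.congr fun k => by simp

lemma tsum_pair_zero (g : ℕ → ℝ) :
    ∑' p : ℕ × ℕ, (if p.2 = 0 then g p.1 else 0) = ∑' k, g k := by
  rw [← Function.Injective.tsum_eq pair_inj (pair_supp g)]
  exact tsum_congr fun k => by simp

lemma pointwise_sum (r β : ℝ) (x : ℝ) :
    besselJ0 (r * x) * x * Real.exp (-x ^ 2 / 2) * (1 + besselJ0 (β * x))
      = ∑' p : ℕ × ℕ, (FF1 r p x + FF2 r β p x) := by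
  have h2 : ∑' p : ℕ × ℕ, FF2 r β p x
      = besselJ0 (r * x) * besselJ0 (β * x) * (x * Real.exp (-x ^ 2 / 2)) := by
    calc ∑' p : ℕ × ℕ, FF2 r β p x
        = (∑' p : ℕ × ℕ, aterm r p.1 x * aterm β p.2 x) * (x * Real.exp (-x ^ 2 / 2)) :=
          tsum_mul_right
      _ = _ := by
          rw [← tsum_mul_tsum_of_summable_norm (aterm_norm_summable r x)
            (aterm_norm_summable β x), ← besselJ0_eq, ← besselJ0_eq]
  have h1 : ∑' p : ℕ × ℕ, FF1 r p x
      = besselJ0 (r * x) * (x * Real.exp (-x ^ 2 / 2)) := by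
    have e0 : ∑' p : ℕ × ℕ, FF1 r p x
        = ∑' k : ℕ, FF1 r (k, 0) x := by
      rw [← Function.Injective.tsum_eq pair_inj (f := fun p => FF1 r p x) ?_]
      · intro p hp
        by_cases h : p.2 = 0
        · exact ⟨p.1, by simp [Prod.ext_iff, h]⟩
        · exact absurd (if_neg h) hp
    rw [e0]
    calc ∑' k : ℕ, FF1 r (k, 0) x
        = ∑' k : ℕ, aterm r k x * (x * Real.exp (-x ^ 2 / 2)) :=
          tsum_congr fun k => by simp [FF1]
      _ = (∑' k : ℕ, aterm r k x) * (x * Real.exp (-x ^ 2 / 2)) := tsum_mul_right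
      _ = _ := by rw [← besselJ0_eq]
  have hs1 : Summable fun p : ℕ × ℕ => FF1 r p x :=
    summable_pair_zero _ (((aterm_summable r x)).mul_right (x * Real.exp (-x ^ 2 / 2)))
  have hs2 : Summable fun p : ℕ × ℕ => FF2 r β p x :=
    (summable_mul_of_summable_norm (aterm_norm_summable r x)
      (aterm_norm_summable β x)).mul_right _
  rw [Summable.tsum_add hs1 hs2, h1, h2]
  ring

lemma hankel_main (r β : ℝ) :
    ∫ x in Ioi (0 : ℝ), besselJ0 (r * x) * x * Real.exp (-x ^ 2 / 2) * (1 + besselJ0 (β * x))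
      = Real.exp (-r ^ 2 / 2) * (1 + Real.exp (-β ^ 2 / 2)
          * ∑' m : ℕ, ((r ^ 2 / 2) * (β ^ 2 / 2)) ^ m / ((m.factorial : ℝ)) ^ 2) := by
  have hi1 := FF1_integrableOn r
  have hi2 := FF2_integrableOn r β
  have hint : ∀ p : ℕ × ℕ, Integrable (fun x => FF1 r p x + FF2 r β p x)
      (volume.restrict (Ioi 0)) := fun p => (hi1 p).add (hi2 p)
  have hn1 : (fun p : ℕ × ℕ => ∫ x in Ioi (0 : ℝ), ‖FF1 r p x‖)
      = fun p => if p.2 = 0 then (r ^ 2 / 2) ^ p.1 / (p.1.factorial : ℝ) else 0 := by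
    funext p
    obtain ⟨k, j⟩ := p
    cases j with
    | zero => simpa using FF1_norm_integral r k
    | succ j => simp [FF1]
  have hnorm1 : Summable (fun p : ℕ × ℕ => ∫ x in Ioi (0 : ℝ), ‖FF1 r p x‖) := by
    rw [hn1]
    exact summable_pair_zero _ (Real.summable_pow_div_factorial _)
  have hnorm2 : Summable (fun p : ℕ × ℕ => ∫ x in Ioi (0 : ℝ), ‖FF2 r β p x‖) := by
    rw [show (fun p : ℕ × ℕ => ∫ x in Ioi (0 : ℝ), ‖FF2 r β p x‖)
      = dd (r ^ 2 / 2) (β ^ 2 / 2) from funext (FF2_norm_integral r β)]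
    exact (key_tsum (r ^ 2 / 2) (β ^ 2 / 2)).1
  have hnorm : Summable fun p : ℕ × ℕ => ∫ x in Ioi (0 : ℝ), ‖FF1 r p x + FF2 r β p x‖ := by
    refine Summable.of_nonneg_of_le (fun p => integral_nonneg fun x => norm_nonneg _)
      (fun p => ?_) (hnorm1.add hnorm2)
    calc ∫ x in Ioi (0 : ℝ), ‖FF1 r p x + FF2 r β p x‖
        ≤ ∫ x in Ioi (0 : ℝ), (‖FF1 r p x‖ + ‖FF2 r β p x‖) :=
          integral_mono ((hint p).norm) (((hi1 p).norm).add ((hi2 p).norm))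
            (fun x => norm_add_le _ _)
      _ = (∫ x in Ioi (0 : ℝ), ‖FF1 r p x‖) + ∫ x in Ioi (0 : ℝ), ‖FF2 r β p x‖ :=
          integral_add ((hi1 p).norm) ((hi2 p).norm)
  have hkey := key_tsum (-r ^ 2 / 2) (-β ^ 2 / 2)
  have hv1 : (fun p : ℕ × ℕ => ∫ x in Ioi (0 : ℝ), FF1 r p x)
      = fun p => if p.2 = 0 then (-r ^ 2 / 2) ^ p.1 / (p.1.factorial : ℝ) else 0 := by
    funext p
    obtain ⟨k, j⟩ := p
    cases j with
    | zero => simpa using FF1_integral r k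
    | succ j => simp [FF1]
  have hv2 : (fun p : ℕ × ℕ => ∫ x in Ioi (0 : ℝ), FF2 r β p x)
      = dd (-r ^ 2 / 2) (-β ^ 2 / 2) := funext (FF2_integral r β)
  have hs1 : Summable (fun p : ℕ × ℕ => ∫ x in Ioi (0 : ℝ), FF1 r p x) := by
    rw [hv1]
    exact summable_pair_zero _ (Real.summable_pow_div_factorial _)
  have hs2 : Summable (fun p : ℕ × ℕ => ∫ x in Ioi (0 : ℝ), FF2 r β p x) := by
    rw [hv2]; exact hkey.1
  calc ∫ x in Ioi (0 : ℝ), besselJ0 (r * x) * x * Real.exp (-x ^ 2 / 2) * (1 + besselJ0 (β * x))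
      = ∫ x in Ioi (0 : ℝ), ∑' p : ℕ × ℕ, (FF1 r p x + FF2 r β p x) :=
        setIntegral_congr_fun measurableSet_Ioi (fun x _ => pointwise_sum r β x)
    _ = ∑' p : ℕ × ℕ, ∫ x in Ioi (0 : ℝ), (FF1 r p x + FF2 r β p x) :=
        (MeasureTheory.integral_tsum_of_summable_integral_norm hint hnorm).symm
    _ = ∑' p : ℕ × ℕ, ((∫ x in Ioi (0 : ℝ), FF1 r p x) + ∫ x in Ioi (0 : ℝ), FF2 r β p x) :=
        tsum_congr fun p => integral_add (hi1 p) (hi2 p)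
    _ = (∑' p : ℕ × ℕ, ∫ x in Ioi (0 : ℝ), FF1 r p x)
        + ∑' p : ℕ × ℕ, ∫ x in Ioi (0 : ℝ), FF2 r β p x := Summable.tsum_add hs1 hs2
    _ = Real.exp (-r ^ 2 / 2) + Real.exp (-r ^ 2 / 2) * Real.exp (-β ^ 2 / 2)
        * ∑' m : ℕ, ((-r ^ 2 / 2) * (-β ^ 2 / 2)) ^ m / ((m.factorial : ℝ)) ^ 2 := by
        congr 1
        · rw [hv1, tsum_pair_zero (fun k => (-r ^ 2 / 2) ^ k / (k.factorial : ℝ)), ← exp_tsum]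
        · rw [hv2, hkey.2]
    _ = _ := by
        rw [show ((-r ^ 2 / 2) * (-β ^ 2 / 2) : ℝ) = (r ^ 2 / 2) * (β ^ 2 / 2) by ring]
        ring

/-- Cat-code MacWilliams identity (Hankel transform with modified Bessel output):
`∫_0^∞ J_0(rx)·x·e^{−x²/2}·(1 + J_0(2αx)) dx = e^{−r²/2}·(1 + e^{−2α²}·I_0(2αr))`. -/
theorem hankel_cat_code (r α : ℝ) (hr : 0 ≤ r) (hα : 0 ≤ α) :
    ∫ x in Set.Ioi (0 : ℝ),
        besselJ0 (r * x) * x * Real.exp (-x ^ 2 / 2) * (1 + besselJ0 (2 * α * x)) =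
      Real.exp (-r ^ 2 / 2) * (1 + Real.exp (-2 * α ^ 2) * besselI0 (2 * α * r)) := by
  have e2 : besselI0 (2 * α * r)
      = ∑' m : ℕ, ((r ^ 2 / 2) * ((2 * α) ^ 2 / 2)) ^ m / ((m.factorial : ℝ)) ^ 2 := by
    rw [besselI0]
    refine tsum_congr fun m => ?_
    rw [pow_mul]
    congr 1
    ring
  rw [hankel_main r (2 * α), e2, show (-(2 * α) ^ 2 / 2 : ℝ) = -2 * α ^ 2 by ring]
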